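/- Let R be a GCD domain satisfying the ascending chain condition on principal ideals, and let x₁, …, x_k be nonzero elements of R. Then there exists a finite set P of nonzero elements of R, pairwise relatively prime (the gcd of any two distinct members of P is a unit), such that each xᵢ is an associate of a product of elements of P. -/

import Mathlib

/-- **Quasi-factorization.** Given nonzero elements `x₁, …, x_k` of a GCD domain
satisfying the ascending chain condition on principal ideals, there is a finite set `P`
of nonzero, pairwise relatively prime elements such that each `xᵢ` is an associate of a
product of elements of `P`. -/
theorem quasi_factorization
    {R : Type} [CommRing R] [IsDomain R] [GCDMonoid R]
    (hacc : ∀ b : ℕ → R, (∀ i, Ideal.span {b i} ≤ Ideal.span {b (i + 1)}) →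
      ∃ n, Ideal.span {b n} = Ideal.span {b (n + 1)})
    {k : ℕ} (x : Fin k → R) (hx : ∀ i, x i ≠ 0) :
    ∃ P : Finset R,
      (∀ p ∈ P, p ≠ 0) ∧
      (∀ p ∈ P, ∀ q ∈ P, p ≠ q → IsRelPrime p q) ∧
      (∀ i : Fin k, ∃ s : Multiset R, (∀ p ∈ s, p ∈ P) ∧ Associated (x i) s.prod) := by
  classical
  haveI : IsIrrefl R DvdNotUnit := ⟨by
    rintro a ⟨ha, x, hx, hax⟩
    exact hx (IsUnit.of_mul_eq_one (a := x) 1 (by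
      have := mul_left_cancel₀ ha (hax.symm.trans (mul_one a).symm)
      simp [this]))⟩
  haveI : IsTrans R DvdNotUnit := ⟨by
    rintro a b c ⟨ha, x, hx, rfl⟩ ⟨hb, y, hy, rfl⟩
    exact ⟨ha, x * y, fun h => hx (isUnit_of_mul_isUnit_left h), mul_assoc a x y⟩⟩
  haveI : IsStrictOrder R DvdNotUnit := {}
  have hW : WellFounded (DvdNotUnit (α := R)) := by
    rw [RelEmbedding.wellFounded_iff_isEmpty]
    refine ⟨fun f => ?_⟩
    have hstep : ∀ i : ℕ, DvdNotUnit (f (i + 1)) (f i) := fun i =>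
      f.map_rel_iff.mpr (Nat.lt_succ_self i)
    have hd : ∀ i : ℕ, (f (i + 1) : R) ∣ f i := by
      intro i
      obtain ⟨-, c, -, hc⟩ := hstep i
      exact ⟨c, hc⟩
    obtain ⟨n, hn⟩ := hacc (fun n => f n) (fun i => by
      rw [Ideal.span_singleton_le_span_singleton]
      exact hd i)
    have h2 : (f n : R) ∣ f (n + 1) := by
      rw [← Ideal.span_singleton_le_span_singleton]
      exact hn.ge
    exact (hstep n).not_associated (associated_of_dvd_dvd (hd n) h2)
  have hwf : WfDvdMonoid R := ⟨hW⟩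
  have hufd : UniqueFactorizationMonoid R := ufm_of_decomposition_of_wfDvdMonoid
  letI : NormalizationMonoid R := UniqueFactorizationMonoid.normalizationMonoid.toNormalizationMonoid
  refine ⟨Finset.univ.biUnion
      (fun i => (UniqueFactorizationMonoid.normalizedFactors (x i)).toFinset), ?_, ?_, ?_⟩
  · intro p hp
    simp only [Finset.mem_biUnion, Multiset.mem_toFinset] at hp
    obtain ⟨i, -, hpi⟩ := hp
    exact (UniqueFactorizationMonoid.prime_of_normalized_factor p hpi).ne_zero
  · intro p hp q hq hpq
    simp only [Finset.mem_biUnion, Multiset.mem_toFinset] at hp hq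
    obtain ⟨i, -, hpi⟩ := hp
    obtain ⟨j, -, hqj⟩ := hq
    have hpprime := UniqueFactorizationMonoid.prime_of_normalized_factor p hpi
    have hqprime := UniqueFactorizationMonoid.prime_of_normalized_factor q hqj
    rw [hpprime.irreducible.isRelPrime_iff_not_dvd]
    intro hdvd
    have hqp : Associated q p :=
      (hqprime.irreducible.dvd_iff.mp hdvd).resolve_left hpprime.not_isUnit
    refine hpq ?_
    calc p = normalize p := (UniqueFactorizationMonoid.normalize_normalized_factor p hpi).symm
      _ = normalize q := normalize_eq_normalize hdvd hqp.dvd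
      _ = q := UniqueFactorizationMonoid.normalize_normalized_factor q hqj
  · intro i
    refine ⟨UniqueFactorizationMonoid.normalizedFactors (x i), ?_, ?_⟩
    · intro p hp
      simp only [Finset.mem_biUnion, Multiset.mem_toFinset]
      exact ⟨i, Finset.mem_univ i, hp⟩
    · exact (UniqueFactorizationMonoid.prod_normalizedFactors (hx i)).symm
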